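/- Let X, Y be random variables with joint distribution p_{X,Y} on finite alphabets 𝒳, 𝒴 such that both marginals p_X and p_Y are strictly positive, let 𝒜 be a finite nonempty action set, let g : 𝒳 × 𝒜 → ℝ be a gain function, and let φ : ℝ → ℝ be a strictly monotone continuous bijection. Then the generalized average g-posterior conditional vulnerability and the generalized g-Bayes conditional vulnerability with ψ = φ coincide: V̂_{φ,φ,g}(X|Y) = V_{φ,φ,g}(X|Y). -/

import Mathlib

/-- The generalized average g-posterior conditional vulnerability
`V̂_{ψ,φ,g}(X|Y) := M_ψ[max_a M_φ[g(X,a) | Y]]` for a joint distribution `p` on `𝒳 × 𝒴`,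
where `ψinv` (resp. `φinv`) denotes the inverse of `ψ` (resp. `φ`),
`p_Y(y) = Σ_x p(x,y)` and `p_{X|Y}(x|y) = p(x,y)/p_Y(y)`. -/
noncomputable def Vhat {𝒳 𝒴 𝒜 : Type*} [Fintype 𝒳] [Fintype 𝒴] [Fintype 𝒜] [Nonempty 𝒜]
    (p : 𝒳 → 𝒴 → ℝ) (ψ ψinv φ φinv : ℝ → ℝ) (g : 𝒳 → 𝒜 → ℝ) : ℝ :=
  ψinv (∑ y, (∑ x, p x y) *
    ψ (Finset.univ.sup' Finset.univ_nonempty fun a =>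
      φinv (∑ x, (p x y / ∑ x', p x' y) * φ (g x a))))

/-- The generalized g-Bayes conditional vulnerability
`V_{φ,ψ,g}(X|Y) := max_{δ : 𝒴 → 𝒜} M_φ[M_ψ[g(X,δ(Y)) | X]]` for a joint distribution `p`
on `𝒳 × 𝒴`, where `p_X(x) = Σ_y p(x,y)` and `p_{Y|X}(y|x) = p(x,y)/p_X(x)`. -/
noncomputable def VBayes {𝒳 𝒴 𝒜 : Type*} [Fintype 𝒳] [Fintype 𝒴] [DecidableEq 𝒴]
    [Fintype 𝒜] [Nonempty 𝒜]
    (p : 𝒳 → 𝒴 → ℝ) (φ φinv ψ ψinv : ℝ → ℝ) (g : 𝒳 → 𝒜 → ℝ) : ℝ :=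
  Finset.univ.sup' Finset.univ_nonempty fun δ : 𝒴 → 𝒜 =>
    φinv (∑ x, (∑ y, p x y) *
      φ (ψinv (∑ y, (p x y / ∑ y', p x y') * ψ (g x (δ y)))))


section Helpers
open Finset

lemma mono_map_sup' {ι : Type*} {s : Finset ι} (H : s.Nonempty) {m : ℝ → ℝ}
    (hm : Monotone m) (f : ι → ℝ) : m (s.sup' H f) = s.sup' H fun i => m (f i) :=
  Finset.comp_sup'_eq_sup'_comp H m fun x y => hm.map_sup x y

lemma mono_map_inf' {ι : Type*} {s : Finset ι} (H : s.Nonempty) {m : ℝ → ℝ}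
    (hm : Monotone m) (f : ι → ℝ) : m (s.inf' H f) = s.inf' H fun i => m (f i) :=
  Finset.apply_inf'_eq_inf'_comp H m fun x y => hm.map_inf x y

lemma anti_map_sup' {ι : Type*} {s : Finset ι} (H : s.Nonempty) {m : ℝ → ℝ}
    (hm : Antitone m) (f : ι → ℝ) : m (s.sup' H f) = s.inf' H fun i => m (f i) := by
  obtain ⟨i, hi, hEq⟩ := s.exists_mem_eq_sup' H f
  refine le_antisymm (Finset.le_inf' _ _ fun j hj => hm (Finset.le_sup' f hj)) ?_
  rw [hEq]; exact Finset.inf'_le _ hi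

lemma anti_map_inf' {ι : Type*} {s : Finset ι} (H : s.Nonempty) {m : ℝ → ℝ}
    (hm : Antitone m) (f : ι → ℝ) : m (s.inf' H f) = s.sup' H fun i => m (f i) := by
  obtain ⟨i, hi, hEq⟩ := s.exists_mem_eq_inf' H f
  refine le_antisymm ?_ (Finset.sup'_le _ _ fun j hj => hm (Finset.inf'_le f hj))
  rw [hEq]; exact Finset.le_sup' (fun i => m (f i)) hi

lemma sup'_sum_swap {𝒴 𝒜 : Type*} [Fintype 𝒴] [DecidableEq 𝒴] [Fintype 𝒜] [Nonempty 𝒜] (F : 𝒴 → 𝒜 → ℝ) :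
    (Finset.univ.sup' Finset.univ_nonempty fun δ : 𝒴 → 𝒜 => ∑ y, F y (δ y)) =
      ∑ y, Finset.univ.sup' Finset.univ_nonempty fun a => F y a := by
  apply le_antisymm
  · exact Finset.sup'_le _ _ fun δ _ =>
      Finset.sum_le_sum fun y _ => Finset.le_sup' _ (Finset.mem_univ (δ y))
  · have h : ∀ y : 𝒴, ∃ a : 𝒜,
        (Finset.univ.sup' Finset.univ_nonempty fun a => F y a) = F y a := fun y => by
      obtain ⟨a, _, ha⟩ := Finset.exists_mem_eq_sup' (Finset.univ_nonempty) fun a => F y a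
      exact ⟨a, ha⟩
    choose δ hδ using h
    calc (∑ y, Finset.univ.sup' Finset.univ_nonempty fun a => F y a)
        = ∑ y, F y (δ y) := by exact Finset.sum_congr rfl fun y _ => hδ y
      _ ≤ _ := Finset.le_sup' (fun δ : 𝒴 → 𝒜 => ∑ y, F y (δ y)) (Finset.mem_univ δ)

lemma inf'_sum_swap {𝒴 𝒜 : Type*} [Fintype 𝒴] [DecidableEq 𝒴] [Fintype 𝒜] [Nonempty 𝒜] (F : 𝒴 → 𝒜 → ℝ) :
    (Finset.univ.inf' Finset.univ_nonempty fun δ : 𝒴 → 𝒜 => ∑ y, F y (δ y)) =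
      ∑ y, Finset.univ.inf' Finset.univ_nonempty fun a => F y a := by
  apply le_antisymm
  · have h : ∀ y : 𝒴, ∃ a : 𝒜,
        (Finset.univ.inf' Finset.univ_nonempty fun a => F y a) = F y a := fun y => by
      obtain ⟨a, _, ha⟩ := Finset.exists_mem_eq_inf' (Finset.univ_nonempty) fun a => F y a
      exact ⟨a, ha⟩
    choose δ hδ using h
    calc (Finset.univ.inf' Finset.univ_nonempty fun δ : 𝒴 → 𝒜 => ∑ y, F y (δ y))
        ≤ ∑ y, F y (δ y) := Finset.inf'_le (fun δ : 𝒴 → 𝒜 => ∑ y, F y (δ y)) (Finset.mem_univ δ)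
      _ = _ := (Finset.sum_congr rfl fun y _ => (hδ y).symm)
  · exact Finset.le_inf' _ _ fun δ _ =>
      Finset.sum_le_sum fun y _ => Finset.inf'_le _ (Finset.mem_univ (δ y))

end Helpers

/-- For a joint distribution on finite alphabets with strictly positive
marginals `p_X` and `p_Y`, a finite nonempty action set, a gain function `g`, and a
strictly monotone continuous bijection `φ : ℝ → ℝ`, the generalized average g-posterior
conditional vulnerability and the generalized g-Bayes conditional vulnerability with
`ψ = φ` coincide: `V̂_{φ,φ,g}(X|Y) = V_{φ,φ,g}(X|Y)`. -/

theorem Vhat_eq_VBayes_of_eq_means {𝒳 𝒴 𝒜 : Type*} [Fintype 𝒳] [Fintype 𝒴]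
    [DecidableEq 𝒴] [Fintype 𝒜] [Nonempty 𝒜]
    (p : 𝒳 → 𝒴 → ℝ) (hp0 : ∀ x y, 0 ≤ p x y) (hp1 : ∑ x, ∑ y, p x y = 1)
    (hpX : ∀ x, 0 < ∑ y, p x y) (hpY : ∀ y, 0 < ∑ x, p x y)
    (g : 𝒳 → 𝒜 → ℝ) (φ : ℝ → ℝ)
    (hφ : StrictMono φ ∨ StrictAnti φ) (hφc : Continuous φ) (hφb : Function.Bijective φ) :
    Vhat p φ (Function.invFun φ) φ (Function.invFun φ) g =
      VBayes p φ (Function.invFun φ) φ (Function.invFun φ) g := by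
  have hri : ∀ t, φ (Function.invFun φ t) = t := fun t =>
    Function.rightInverse_invFun hφb.surjective t
  set F : 𝒴 → 𝒜 → ℝ := fun y a => ∑ x, p x y * φ (g x a) with hF
  -- fact A : the rescaled inner sum in Vhat equals F
  have hA : ∀ (y : 𝒴) (a : 𝒜),
      (∑ x', p x' y) * ∑ x, (p x y / ∑ x', p x' y) * φ (g x a) = F y a := by
    intro y a
    rw [Finset.mul_sum, hF]
    refine Finset.sum_congr rfl fun x _ => ?_
    field_simp
    rw [mul_assoc]; exact mul_div_cancel_left₀ _ (hpY y).ne'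
  -- fact B : the VBayes body for each decision rule δ
  have hB : ∀ δ : 𝒴 → 𝒜,
      (∑ x, (∑ y, p x y) *
        φ (Function.invFun φ (∑ y, (p x y / ∑ y', p x y') * φ (g x (δ y))))) =
      ∑ y, F y (δ y) := by
    intro δ
    have h1 : ∀ x, (∑ y, p x y) *
        φ (Function.invFun φ (∑ y, (p x y / ∑ y', p x y') * φ (g x (δ y)))) =
        ∑ y, p x y * φ (g x (δ y)) := fun x => by
      rw [hri, Finset.mul_sum]
      refine Finset.sum_congr rfl fun y _ => ?_
      field_simp
      rw [mul_assoc]; exact mul_div_cancel_left₀ _ (hpX x).ne'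
    calc (∑ x, (∑ y, p x y) *
          φ (Function.invFun φ (∑ y, (p x y / ∑ y', p x y') * φ (g x (δ y)))))
        = ∑ x, ∑ y, p x y * φ (g x (δ y)) := Finset.sum_congr rfl fun x _ => h1 x
      _ = ∑ y, F y (δ y) := Finset.sum_comm
  rcases hφ with hmono | hanti
  · -- strictly monotone case
    have hinvm : Monotone (Function.invFun φ) := fun a b h =>
      (hmono.le_iff_le).mp (by rw [hri, hri]; exact h)
    have hL : Vhat p φ (Function.invFun φ) φ (Function.invFun φ) g =
        Function.invFun φ (∑ y, Finset.univ.sup' Finset.univ_nonempty fun a => F y a) := by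
      unfold Vhat
      congr 1
      refine Finset.sum_congr rfl fun y _ => ?_
      rw [mono_map_sup' _ hmono.monotone]
      simp_rw [hri]
      rw [mono_map_sup' (m := fun t => (∑ x, p x y) * t) _
        (fun a b h => by dsimp; nlinarith [hpY y])]
      exact congrArg _ (funext fun a => hA y a)
    rw [hL]
    unfold VBayes
    rw [show (fun δ : 𝒴 → 𝒜 => Function.invFun φ (∑ x, (∑ y, p x y) *
          φ (Function.invFun φ (∑ y, (p x y / ∑ y', p x y') * φ (g x (δ y)))))) =
        fun δ : 𝒴 → 𝒜 => Function.invFun φ (∑ y, F y (δ y)) from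
      funext fun δ => congrArg _ (hB δ)]
    rw [← mono_map_sup' _ hinvm, sup'_sum_swap]
  · -- strictly antitone case
    have hinva : Antitone (Function.invFun φ) := fun a b h =>
      (hanti.le_iff_ge).mp (by rw [hri, hri]; exact h)
    have hL : Vhat p φ (Function.invFun φ) φ (Function.invFun φ) g =
        Function.invFun φ (∑ y, Finset.univ.inf' Finset.univ_nonempty fun a => F y a) := by
      unfold Vhat
      congr 1
      refine Finset.sum_congr rfl fun y _ => ?_
      rw [anti_map_sup' _ hanti.antitone]
      simp_rw [hri]
      rw [mono_map_inf' (m := fun t => (∑ x, p x y) * t) _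
        (fun a b h => by dsimp; nlinarith [hpY y])]
      exact congrArg _ (funext fun a => hA y a)
    rw [hL]
    unfold VBayes
    rw [show (fun δ : 𝒴 → 𝒜 => Function.invFun φ (∑ x, (∑ y, p x y) *
          φ (Function.invFun φ (∑ y, (p x y / ∑ y', p x y') * φ (g x (δ y)))))) =
        fun δ : 𝒴 → 𝒜 => Function.invFun φ (∑ y, F y (δ y)) from
      funext fun δ => congrArg _ (hB δ)]
    rw [← anti_map_inf' _ hinva, inf'_sum_swap]
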